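/- For the path P_n on n ≥ 1 vertices, γ_I(P_n ⊙ K_1) = ⌈4n/3⌉. -/

import Mathlib

open SimpleGraph Finset
open scoped Classical

/-- An Italian dominating function: values in {0,1,2}, and every vertex with
value 0 has neighbor values summing to at least 2. -/
def IsItalian {V : Type*} [Fintype V] (G : SimpleGraph V) (f : V → ℕ) : Prop :=
  (∀ v, f v ≤ 2) ∧
    ∀ v, f v = 0 → 2 ≤ ∑ u ∈ Finset.univ.filter (fun w => G.Adj v w), f u

/-- The Italian domination number: minimum weight of an Italian dominating function. -/
noncomputable def italianDomNumber {V : Type*} [Fintype V] (G : SimpleGraph V) : ℕ :=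
  sInf {w | ∃ f : V → ℕ, IsItalian G f ∧ ∑ v, f v = w}

/-- The corona `G ⊙ K₁`: attach one pendant vertex (an `inr` copy) to each vertex of `G`. -/
def coronaK1 {V : Type*} (G : SimpleGraph V) : SimpleGraph (V ⊕ V) :=
  SimpleGraph.fromRel (fun a b =>
    match a, b with
    | Sum.inl u, Sum.inl v => G.Adj u v
    | Sum.inl u, Sum.inr v => u = v
    | Sum.inr u, Sum.inl v => u = v
    | Sum.inr _, Sum.inr _ => False)

/-- The corona `G ⊙ H`: one copy of `H` per vertex of `G`, each joined to that vertex. -/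
def corona {V W : Type*} (G : SimpleGraph V) (H : SimpleGraph W) :
    SimpleGraph (V ⊕ V × W) :=
  SimpleGraph.fromRel (fun a b =>
    match a, b with
    | Sum.inl u, Sum.inl v => G.Adj u v
    | Sum.inl u, Sum.inr p => u = p.1
    | Sum.inr p, Sum.inl v => p.1 = v
    | Sum.inr p, Sum.inr q => p.1 = q.1 ∧ H.Adj p.2 q.2)

lemma corona_adj_ll {V : Type*} (G : SimpleGraph V) (u v : V) :
    (coronaK1 G).Adj (Sum.inl u) (Sum.inl v) ↔ G.Adj u v := by
  simp only [coronaK1, fromRel_adj]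
  constructor
  · rintro ⟨h, h1 | h1⟩ <;> [exact h1; exact h1.symm]
  · intro h; exact ⟨by simp [h.ne], Or.inl h⟩

lemma corona_adj_lr {V : Type*} (G : SimpleGraph V) (u v : V) :
    (coronaK1 G).Adj (Sum.inl u) (Sum.inr v) ↔ u = v := by
  simp only [coronaK1, fromRel_adj]
  constructor
  · rintro ⟨h, h1 | h1⟩ <;> simp_all
  · intro h; exact ⟨by simp, Or.inl h⟩

lemma corona_adj_rl {V : Type*} (G : SimpleGraph V) (u v : V) :
    (coronaK1 G).Adj (Sum.inr u) (Sum.inl v) ↔ u = v := by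
  rw [adj_comm, corona_adj_lr]; exact eq_comm

lemma corona_adj_rr {V : Type*} (G : SimpleGraph V) (u v : V) :
    ¬ (coronaK1 G).Adj (Sum.inr u) (Sum.inr v) := by
  simp [coronaK1, fromRel_adj]

lemma filter_inr {V : Type*} [Fintype V] (G : SimpleGraph V) (i : V) :
    Finset.univ.filter (fun w => (coronaK1 G).Adj (Sum.inr i) w) = {Sum.inl i} := by
  ext u
  cases u with
  | inl v => simp [corona_adj_rl, eq_comm]
  | inr v => simp [corona_adj_rr]

lemma sum_nbhd_inl {V : Type*} [Fintype V] (G : SimpleGraph V) (i : V) (f : V ⊕ V → ℕ) :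
    ∑ u ∈ Finset.univ.filter (fun w => (coronaK1 G).Adj (Sum.inl i) w), f u
      = f (Sum.inr i) + ∑ j ∈ Finset.univ.filter (fun j => G.Adj i j), f (Sum.inl j) := by
  rw [Finset.sum_filter, Fintype.sum_sum_type]
  simp only [corona_adj_ll, corona_adj_lr]
  rw [Finset.sum_ite_eq Finset.univ i (fun v => f (Sum.inr v))]
  rw [← Finset.sum_filter]
  simp [add_comm]

def ubF (n : ℕ) : Fin n ⊕ Fin n → ℕ
| Sum.inl i => if i.val + n % 3 < n then (if i.val % 3 = 1 then 2 else 0)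
               else (if i.val % 3 = 0 then 2 else 0)
| Sum.inr i => if i.val + n % 3 < n then (if i.val % 3 = 1 then 0 else 1)
               else (if i.val % 3 = 0 then 0 else 1)

lemma count_mod3 (m : ℕ) :
    ((Finset.range m).filter (fun i => i % 3 = 1)).card = (m + 1) / 3 := by
  induction m with
  | zero => simp
  | succ m ih =>
    rw [Finset.range_add_one, Finset.filter_insert]
    split_ifs with h
    · rw [Finset.card_insert_of_notMem (by simp)]; omega
    · omega

lemma ubF_sum (n : ℕ) : ∑ v, ubF n v = (4 * n + 2) / 3 := by
  rw [Fintype.sum_sum_type, ← Finset.sum_add_distrib]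
  have hpt : ∀ i : Fin n, ubF n (Sum.inl i) + ubF n (Sum.inr i)
      = 1 + (if (i.val + n % 3 < n ∧ i.val % 3 = 1) ∨ (¬(i.val + n % 3 < n) ∧ i.val % 3 = 0)
             then 1 else 0) := by
    intro i
    simp only [ubF]
    split_ifs <;> omega
  rw [Finset.sum_congr rfl (fun i _ => hpt i)]
  have : ∑ i : Fin n, (1 + (if (i.val + n % 3 < n ∧ i.val % 3 = 1) ∨ (¬(i.val + n % 3 < n) ∧ i.val % 3 = 0) then 1 else 0))
      = ∑ i ∈ Finset.range n, (1 + (if (i + n % 3 < n ∧ i % 3 = 1) ∨ (¬(i + n % 3 < n) ∧ i % 3 = 0) then 1 else 0)) :=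
    Fin.sum_univ_eq_sum_range (fun i => 1 + (if (i + n % 3 < n ∧ i % 3 = 1) ∨ (¬(i + n % 3 < n) ∧ i % 3 = 0) then 1 else 0)) n
  rw [this, Finset.sum_add_distrib]
  simp only [Finset.sum_const, Finset.card_range, smul_eq_mul, mul_one]
  rw [← Finset.card_filter]
  have hsplit : (Finset.range n).filter
      (fun i => (i + n % 3 < n ∧ i % 3 = 1) ∨ (¬(i + n % 3 < n) ∧ i % 3 = 0))
      = (Finset.range (n - n % 3)).filter (fun i => i % 3 = 1)
        ∪ ((Finset.range n).filter (fun i => ¬(i + n % 3 < n) ∧ i % 3 = 0)) := by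
    ext i
    simp only [Finset.mem_filter, Finset.mem_range, Finset.mem_union]
    omega
  rw [hsplit, Finset.card_union_of_disjoint]
  · rw [count_mod3]
    have hB : ((Finset.range n).filter (fun i => ¬(i + n % 3 < n) ∧ i % 3 = 0))
        = if n % 3 = 0 then ∅ else {n - n % 3} := by
      split_ifs with h
      · apply Finset.filter_eq_empty_iff.mpr
        intro i hi
        simp only [Finset.mem_range] at hi
        omega
      · ext i
        simp only [Finset.mem_filter, Finset.mem_range, Finset.mem_singleton]
        omega
    rw [hB]
    split_ifs with h <;> simp <;> omega
  · rw [Finset.disjoint_left]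
    intro i hi hi2
    simp only [Finset.mem_filter, Finset.mem_range] at hi hi2
    omega

lemma ubF_italian (n : ℕ) : IsItalian (coronaK1 (SimpleGraph.pathGraph n)) (ubF n) := by
  constructor
  · rintro (i | i) <;> simp only [ubF] <;> split_ifs <;> omega
  · rintro (i | i) h
    · -- inl case
      rw [sum_nbhd_inl]
      have hlt := i.isLt
      have key : ∃ j : Fin n, (SimpleGraph.pathGraph n).Adj i j ∧ ubF n (Sum.inl j) = 2 := by
        by_cases hC : i.val + n % 3 < n
        · by_cases h0 : i.val % 3 = 0
          · have h1 : i.val + 1 < n := by omega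
            refine ⟨⟨i.val + 1, h1⟩, ?_, ?_⟩
            · rw [SimpleGraph.pathGraph_adj]; left; simp
            · simp only [ubF]; split_ifs with a b c <;> simp_all <;> omega
          · have h2 : i.val % 3 = 2 := by
              simp only [ubF] at h; split_ifs at h <;> omega
            refine ⟨⟨i.val - 1, by omega⟩, ?_, ?_⟩
            · rw [SimpleGraph.pathGraph_adj]; right; simp; omega
            · simp only [ubF]; split_ifs with a b c <;> simp_all <;> omega
        · have h1 : i.val % 3 ≠ 0 := by
            simp only [ubF] at h; split_ifs at h <;> omega
          have h2 : n % 3 = 2 ∧ i.val = n - 1 := by omega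
          refine ⟨⟨i.val - 1, by omega⟩, ?_, ?_⟩
          · rw [SimpleGraph.pathGraph_adj]; right; simp; omega
          · simp only [ubF]; split_ifs with a b c <;> simp_all <;> omega
      obtain ⟨j, hadj, hj2⟩ := key
      have hmem : j ∈ Finset.univ.filter (fun j => (SimpleGraph.pathGraph n).Adj i j) := by
        simp [hadj]
      have hle := Finset.single_le_sum (f := fun j => ubF n (Sum.inl j))
        (fun _ _ => Nat.zero_le _) hmem
      beta_reduce at hle
      omega
    · rw [filter_inr, Finset.sum_singleton]
      simp only [ubF] at h ⊢
      split_ifs at h ⊢ <;> omega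

lemma corona_lower (n : ℕ) (f : Fin n ⊕ Fin n → ℕ)
    (hf : IsItalian (coronaK1 (SimpleGraph.pathGraph n)) f) :
    4 * n ≤ 3 * ∑ v, f v := by
  obtain ⟨hb, hd⟩ := hf
  set g : Fin n → ℕ := fun i => f (Sum.inl i) + f (Sum.inr i) with hgdef
  have hsum : ∑ v, f v = ∑ i, g i := by
    rw [Fintype.sum_sum_type, ← Finset.sum_add_distrib]
  have hg1 : ∀ i, 1 ≤ g i := by
    intro i
    by_contra h
    have h0 : f (Sum.inl i) = 0 ∧ f (Sum.inr i) = 0 := by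
      simp only [hgdef] at h; omega
    have h2 := hd (Sum.inr i) h0.2
    rw [filter_inr, Finset.sum_singleton] at h2
    omega
  have hpend : ∀ i, 1 ≤ f (Sum.inl i) → 2 ≤ g i := by
    intro i h1
    by_cases h : f (Sum.inr i) = 0
    · have h2 := hd (Sum.inr i) h
      rw [filter_inr, Finset.sum_singleton] at h2
      simp only [hgdef]; omega
    · simp only [hgdef]; omega
  have hkey : ∀ i, g i = 1 → ∃ j, (SimpleGraph.pathGraph n).Adj i j ∧ 2 ≤ g j := by
    intro i h1
    have hinl0 : f (Sum.inl i) = 0 := by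
      by_contra h
      have := hpend i (by omega)
      omega
    have h2 := hd (Sum.inl i) hinl0
    rw [sum_nbhd_inl] at h2
    have hinr1 : f (Sum.inr i) = 1 := by simp only [hgdef] at h1; omega
    have hex : ∃ j ∈ Finset.univ.filter (fun j => (SimpleGraph.pathGraph n).Adj i j),
        f (Sum.inl j) ≠ 0 := by
      by_contra hall
      push_neg at hall
      rw [Finset.sum_eq_zero hall] at h2
      omega
    obtain ⟨j, hj, hj0⟩ := hex
    exact ⟨j, (Finset.mem_filter.mp hj).2, hpend j (by omega)⟩
  set S : Finset (Fin n) := Finset.univ.filter (fun i => 2 ≤ g i) with hSdef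
  have hS1 : n + S.card ≤ ∑ i, g i := by
    have step : ∀ i : Fin n, 1 + (if 2 ≤ g i then 1 else 0) ≤ g i := by
      intro i
      have := hg1 i
      split_ifs with h <;> omega
    calc n + S.card = ∑ i : Fin n, (1 + (if 2 ≤ g i then 1 else 0)) := by
          rw [Finset.sum_add_distrib, Finset.sum_const, Finset.card_univ, Fintype.card_fin,
            ← Finset.card_filter]
          simp [hSdef]
      _ ≤ ∑ i, g i := Finset.sum_le_sum (fun i _ => step i)
  have hc : ∀ i : Fin n, ∃ j : Fin n, 2 ≤ g j ∧
      (j.val = i.val ∨ j.val + 1 = i.val ∨ i.val + 1 = j.val) := by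
    intro i
    by_cases h : 2 ≤ g i
    · exact ⟨i, h, Or.inl rfl⟩
    · obtain ⟨j, hadj, hj⟩ := hkey i (by have := hg1 i; omega)
      rw [SimpleGraph.pathGraph_adj] at hadj
      rcases hadj with h' | h'
      · exact ⟨j, hj, Or.inr (Or.inr h')⟩
      · exact ⟨j, hj, Or.inr (Or.inl h')⟩
  choose c hc2 hc3 using hc
  have hmaps : ∀ i ∈ Finset.univ, c i ∈ S := fun i _ =>
    Finset.mem_filter.mpr ⟨Finset.mem_univ _, hc2 i⟩
  have hfib : ∀ b ∈ S, (Finset.univ.filter (fun i => c i = b)).card ≤ 3 := by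
    intro b _
    have h3 : ({b.val - 1, b.val, b.val + 1} : Finset ℕ).card ≤ 3 := by
      apply le_trans (Finset.card_insert_le _ _)
      have := Finset.card_insert_le b.val ({b.val + 1} : Finset ℕ)
      simp only [Finset.card_singleton] at this ⊢
      omega
    refine le_trans (Finset.card_le_card_of_injOn (fun i => i.val) ?_ ?_) h3
    · intro a ha
      simp only [Finset.mem_coe, Finset.mem_filter] at ha
      have h4 := hc3 a
      rw [ha.2] at h4
      simp only [Finset.mem_coe, Finset.mem_insert, Finset.mem_singleton]
      rcases h4 with h' | h' | h' <;> omega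
    · intro a _ b' _ h
      exact Fin.val_injective h
  have hcard := Finset.card_le_mul_card_image_of_maps_to hmaps 3 hfib
  rw [Finset.card_univ, Fintype.card_fin] at hcard
  rw [hsum]
  omega

theorem italian_coronaK1_path (n : ℕ) (hn : 1 ≤ n) :
    italianDomNumber (coronaK1 (SimpleGraph.pathGraph n)) = (4 * n + 2) / 3 := by
  apply le_antisymm
  · exact Nat.sInf_le ⟨ubF n, ubF_italian n, ubF_sum n⟩
  · refine le_csInf ⟨(4 * n + 2) / 3, ubF n, ubF_italian n, ubF_sum n⟩ ?_
    rintro w ⟨f, hf, rfl⟩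
    have := corona_lower n f hf
    omega
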